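/- Let m ≥ 2 be an even integer, let ζ = e^{iπ/m}, let z be a nonzero complex number, and set u = ζ⁻¹z + ζ/z. Then (i) u − 2 = (z − ζ)²/(ζz), and (ii) i · z^{m/2} · ∏_{k=1}^{m/2} ( u − 2cos((2k−1)π/m) ) = z^m − 1. -/

import Mathlib

open Real

/-- For `m ≥ 2` even, `ζ = e^{iπ/m}`, `z ≠ 0` and `u = ζ⁻¹z + ζ/z`:
(i) `u − 2 = (z − ζ)²/(ζz)`, and
(ii) `i·z^{m/2}·∏_{k=1}^{m/2} (u − 2cos((2k−1)π/m)) = z^m − 1`. -/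
theorem zpow_sub_one_factorization_even
    (m : ℕ) (hm : 2 ≤ m) (heven : Even m)
    (ζ z u : ℂ) (hζ : ζ = Complex.exp (Complex.I * ((π : ℝ) : ℂ) / m))
    (hz : z ≠ 0) (hu : u = ζ⁻¹ * z + ζ / z) :
    u - 2 = (z - ζ) ^ 2 / (ζ * z) ∧
    Complex.I * z ^ (m / 2) *
        ∏ k ∈ Finset.Icc 1 (m / 2),
          (u - ((2 * Real.cos ((2 * (k : ℝ) - 1) * π / m) : ℝ) : ℂ))
      = z ^ m - 1 := by
  obtain ⟨h, hmh⟩ := heven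
  have hh1 : 1 ≤ h := by omega
  have hm2 : m / 2 = h := by omega
  have hζ0 : ζ ≠ 0 := by rw [hζ]; exact Complex.exp_ne_zero _
  have hmc : (m : ℂ) ≠ 0 := Nat.cast_ne_zero.mpr (by omega)
  have hζn : ∀ n : ℕ, ζ ^ n = Complex.exp ((n : ℂ) * Complex.I * π / m) := by
    intro n
    rw [hζ, ← Complex.exp_nat_mul]
    congr 1; ring
  have hζ2m : ζ ^ (2 * m) = 1 := by
    rw [hζn]
    rw [show ((2 * m : ℕ) : ℂ) * Complex.I * π / m = 2 * π * Complex.I by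
      push_cast; field_simp]
    exact Complex.exp_two_pi_mul_I
  have hζh : ζ ^ h = Complex.I := by
    rw [hζn]
    rw [show ((h : ℕ) : ℂ) * Complex.I * π / m = (↑(π / 2) : ℂ) * Complex.I by
      push_cast
      rw [show ((m : ℂ)) = 2 * h by push_cast [hmh]; ring]
      have : (h : ℂ) ≠ 0 := Nat.cast_ne_zero.mpr (by omega)
      field_simp]
    rw [Complex.exp_mul_I]
    simp
  refine ⟨by rw [hu]; field_simp; ring, ?_⟩
  rw [hm2]
  -- per-factor identity
  have key : ∀ k ∈ Finset.Icc 1 h,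
      u - ((2 * Real.cos ((2 * (k : ℝ) - 1) * π / m) : ℝ) : ℂ)
        = (z - ζ ^ (2 * k)) * (z - ζ ^ (2 * m + 2 - 2 * k)) / (ζ * z) := by
    intro k hk
    simp only [Finset.mem_Icc] at hk
    set a := ζ ^ (2 * k - 1) with ha
    have ha0 : a ≠ 0 := pow_ne_zero _ hζ0
    have h2k : ζ ^ (2 * k) = a * ζ := by
      rw [ha, ← pow_succ]; congr 1; omega
    have hinv : ζ ^ (2 * m + 1 - 2 * k) = a⁻¹ := by
      refine eq_inv_of_mul_eq_one_left ?_
      rw [ha, ← pow_add, show 2 * m + 1 - 2 * k + (2 * k - 1) = 2 * m by omega]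
      exact hζ2m
    have h2 : ζ ^ (2 * m + 2 - 2 * k) = a⁻¹ * ζ := by
      rw [← hinv, ← pow_succ]; congr 1; omega
    have haexp : a = Complex.exp ((((2 * (k : ℝ) - 1) * π / m : ℝ)) * Complex.I) := by
      rw [ha, hζn]
      congr 1
      have : ((2 * k - 1 : ℕ) : ℂ) = 2 * (k : ℂ) - 1 := by
        push_cast [Nat.cast_sub (by omega : 1 ≤ 2 * k)]; ring
      push_cast [this]
      field_simp
    have hc : ((2 * Real.cos ((2 * (k : ℝ) - 1) * π / m) : ℝ) : ℂ) = a + a⁻¹ := by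
      rw [Complex.ofReal_mul, Complex.ofReal_cos, Complex.cos, haexp, ← Complex.exp_neg, neg_mul]
      push_cast
      ring
    rw [hu, hc, h2k, h2]
    field_simp; ring
  rw [Finset.prod_congr rfl key, Finset.prod_div_distrib, Finset.prod_const,
    Nat.card_Icc, Finset.prod_mul_distrib]
  have hAB : (∏ k ∈ Finset.Icc 1 h, (z - ζ ^ (2 * k))) *
      ∏ k ∈ Finset.Icc 1 h, (z - ζ ^ (2 * m + 2 - 2 * k)) = z ^ m - 1 := by
    set ω := ζ ^ 2 with hω
    have hωm : ω ^ m = 1 := by rw [hω, ← pow_mul]; exact hζ2m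
    have hA : (∏ k ∈ Finset.Icc 1 h, (z - ζ ^ (2 * k)))
        = ∏ i ∈ Finset.range h, (z - ω ^ (i + 1)) := by
      rw [← Finset.Ico_add_one_right_eq_Icc, Finset.prod_Ico_eq_prod_range]
      refine Finset.prod_congr (by rw [Nat.add_sub_cancel]) fun i _ => ?_
      rw [hω, ← pow_mul]; congr 2; omega
    have hB : (∏ k ∈ Finset.Icc 1 h, (z - ζ ^ (2 * m + 2 - 2 * k)))
        = ∏ i ∈ Finset.range h, (z - ω ^ (h + i + 1)) := by
      rw [← Finset.Ico_add_one_right_eq_Icc, Finset.prod_Ico_eq_prod_range, Nat.add_sub_cancel]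
      rw [← Finset.prod_range_reflect (fun i => (z - ω ^ (h + i + 1))) h]
      refine Finset.prod_congr rfl fun i hi => ?_
      simp only [Finset.mem_range] at hi
      rw [hω, ← pow_mul]; congr 2; omega
    rw [hA, hB, ← Finset.prod_range_add (fun i => z - ω ^ (i + 1)) h h]
    have hshift : (∏ i ∈ Finset.range (h + h), (z - ω ^ (i + 1)))
        = ∏ i ∈ Finset.range m, (z - ω ^ i) := by
      obtain ⟨n, hn⟩ : ∃ n, m = n + 1 := ⟨m - 1, by omega⟩
      rw [← hmh, hn, Finset.prod_range_succ, Finset.prod_range_succ']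
      rw [show ω ^ (n + 1) = ω ^ 0 by rw [← hn]; simp [hωm]]
    rw [hshift]
    have hω' : ω = Complex.exp (2 * π * Complex.I / m) := by
      rw [hω, hζn]
      congr 1; push_cast; ring
    rw [hω']
    have hprim := Complex.isPrimitiveRoot_exp m (by omega)
    have := X_pow_sub_C_eq_prod hprim (by omega : 0 < m) (one_pow m)
    have h2 := congrArg (Polynomial.eval z) this
    simpa [Polynomial.eval_prod] using h2.symm
  rw [hAB, Nat.add_sub_cancel, mul_pow, hζh]
  have : Complex.I ≠ 0 := Complex.I_ne_zero
  field_simp
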